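/- Let G and H be nonzero formal power series in ℝ[[ρ,θ]] with supports Δ(G), Δ(H) ⊆ ℤ≥0². Then the lower convex semi-hull of the support of the product satisfies ℘(Δ(G·H)) = ℘(Δ(G)) + ℘(Δ(H)) (Minkowski sum of the lower convex semi-hulls). -/

import Mathlib

open scoped Pointwise

/-- The coefficient of `ρ^i θ^j` in a formal power series in two variables over `ℝ`. -/
noncomputable def coef (F : MvPowerSeries (Fin 2) ℝ) (p : ℕ × ℕ) : ℝ :=
  MvPowerSeries.coeff (R := ℝ) (Finsupp.single (0 : Fin 2) p.1 + Finsupp.single (1 : Fin 2) p.2) F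

/-- The support (valid index set) `Δ(F)` of a power series. -/
noncomputable def suppSet (F : MvPowerSeries (Fin 2) ℝ) : Set (ℕ × ℕ) :=
  {p | coef F p ≠ 0}

/-- Embedding of lattice indices into `ℝ²`. -/
noncomputable def embed (p : ℕ × ℕ) : ℝ × ℝ := ((p.1 : ℝ), (p.2 : ℝ))

/-- The lower convex semi-hull `℘(S) = conv(S + ℝ≥0²)` of a set of lattice points. -/
noncomputable def lsh (S : Set (ℕ × ℕ)) : Set (ℝ × ℝ) :=
  convexHull ℝ (embed '' S + {q : ℝ × ℝ | 0 ≤ q.1 ∧ 0 ≤ q.2})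

namespace LshAux

/-- The positive cone in `ℝ²`. -/
def cone : Set (ℝ × ℝ) := {q : ℝ × ℝ | 0 ≤ q.1 ∧ 0 ≤ q.2}

lemma lsh_def (S : Set (ℕ × ℕ)) : lsh S = convexHull ℝ (embed '' S + cone) := rfl

lemma zero_mem_cone : (0 : ℝ × ℝ) ∈ cone := ⟨le_refl 0, le_refl 0⟩

lemma convex_cone : Convex ℝ cone := by
  intro x hx y hy s t hs ht _
  constructor
  · have : 0 ≤ s * x.1 + t * y.1 := by nlinarith [hx.1, hy.1]
    simpa using this
  · have : 0 ≤ s * x.2 + t * y.2 := by nlinarith [hx.2, hy.2]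
    simpa using this

lemma isClosed_cone : IsClosed cone := by
  have : cone = (Prod.fst ⁻¹' Set.Ici (0 : ℝ)) ∩ (Prod.snd ⁻¹' Set.Ici (0 : ℝ)) := rfl
  rw [this]
  exact (isClosed_Ici.preimage continuous_fst).inter (isClosed_Ici.preimage continuous_snd)

lemma cone_add_cone : cone + cone = cone := by
  apply Set.Subset.antisymm
  · rintro x ⟨a, ha, b, hb, rfl⟩
    exact ⟨by simpa using add_nonneg ha.1 hb.1, by simpa using add_nonneg ha.2 hb.2⟩
  · intro x hx
    exact ⟨x, hx, 0, zero_mem_cone, add_zero x⟩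

/-- `embed` as an additive monoid hom. -/
noncomputable def embedHom : ℕ × ℕ →+ ℝ × ℝ :=
  AddMonoidHom.prodMap (Nat.castAddMonoidHom ℝ) (Nat.castAddMonoidHom ℝ)

lemma embed_eq : embed = ⇑embedHom := rfl

lemma fin2_decomp (d : Fin 2 →₀ ℕ) :
    d = Finsupp.single 0 (d 0) + Finsupp.single 1 (d 1) := by
  ext x
  fin_cases x <;> simp

lemma coeff_eq_coef (F : MvPowerSeries (Fin 2) ℝ) (d : Fin 2 →₀ ℕ) :
    MvPowerSeries.coeff (R := ℝ) d F = coef F (d 0, d 1) := by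
  rw [coef]
  conv_lhs => rw [fin2_decomp d]

lemma suppSet_nonempty {F : MvPowerSeries (Fin 2) ℝ} (hF : F ≠ 0) : (suppSet F).Nonempty := by
  have : ∃ d, MvPowerSeries.coeff (R := ℝ) d F ≠ 0 := by
    by_contra h
    push_neg at h
    exact hF (MvPowerSeries.ext fun d => by simp [h d])
  obtain ⟨d, hd⟩ := this
  exact ⟨(d 0, d 1), by rwa [suppSet, Set.mem_setOf_eq, ← coeff_eq_coef]⟩

lemma suppSet_mul_subset (G H : MvPowerSeries (Fin 2) ℝ) :
    suppSet (G * H) ⊆ suppSet G + suppSet H := by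
  classical
  intro p hp
  rw [suppSet, Set.mem_setOf_eq, coef, MvPowerSeries.coeff_mul] at hp
  obtain ⟨q, hq, hne⟩ := Finset.exists_ne_zero_of_sum_ne_zero hp
  rw [Finset.HasAntidiagonal.mem_antidiagonal] at hq
  have h0 : q.1 0 + q.2 0 = p.1 := by
    have := congrArg (fun f : Fin 2 →₀ ℕ => f 0) hq
    simpa using this
  have h1 : q.1 1 + q.2 1 = p.2 := by
    have := congrArg (fun f : Fin 2 →₀ ℕ => f 1) hq
    simpa using this
  refine ⟨(q.1 0, q.1 1), ?_, (q.2 0, q.2 1), ?_, ?_⟩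
  · rw [suppSet, Set.mem_setOf_eq, ← coeff_eq_coef]
    exact left_ne_zero_of_mul hne
  · rw [suppSet, Set.mem_setOf_eq, ← coeff_eq_coef]
    exact right_ne_zero_of_mul hne
  · exact Prod.ext h0 h1

/-- The linear functional attains its minimum on any nonempty set of lattice points. -/
lemma exists_ell_min (S : Set (ℕ × ℕ)) (hS : S.Nonempty) (α β : ℝ) (hα : 0 ≤ α) (hβ : 0 ≤ β) :
    ∃ u ∈ S, ∀ s ∈ S, α * u.1 + β * u.2 ≤ α * s.1 + β * s.2 := by
  obtain ⟨s₀, hs₀⟩ := hS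
  rcases eq_or_lt_of_le hα with hα0 | hαpos
  · rcases eq_or_lt_of_le hβ with hβ0 | hβpos
    · exact ⟨s₀, hs₀, fun s _ => by rw [← hα0, ← hβ0]; simp⟩
    · -- α = 0, β > 0 : minimize the second coordinate
      have hne : {j : ℕ | ∃ i : ℕ, (i, j) ∈ S}.Nonempty := ⟨s₀.2, s₀.1, by simpa using hs₀⟩
      obtain ⟨i, hi⟩ := Nat.sInf_mem hne
      refine ⟨(i, sInf {j : ℕ | ∃ i : ℕ, (i, j) ∈ S}), hi, fun s hs => ?_⟩
      have hle : sInf {j : ℕ | ∃ i : ℕ, (i, j) ∈ S} ≤ s.2 := Nat.sInf_le ⟨s.1, by simpa using hs⟩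
      have hcast := (Nat.cast_le (α := ℝ)).mpr hle
      rw [← hα0]
      simp only [zero_mul, zero_add]
      exact mul_le_mul_of_nonneg_left hcast hβ
  · rcases eq_or_lt_of_le hβ with hβ0 | hβpos
    · -- β = 0, α > 0 : minimize the first coordinate
      have hne : {i : ℕ | ∃ j : ℕ, (i, j) ∈ S}.Nonempty := ⟨s₀.1, s₀.2, by simpa using hs₀⟩
      obtain ⟨j, hj⟩ := Nat.sInf_mem hne
      refine ⟨(sInf {i : ℕ | ∃ j : ℕ, (i, j) ∈ S}, j), hj, fun s hs => ?_⟩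
      have hle : sInf {i : ℕ | ∃ j : ℕ, (i, j) ∈ S} ≤ s.1 := Nat.sInf_le ⟨s.2, by simpa using hs⟩
      have hcast := (Nat.cast_le (α := ℝ)).mpr hle
      rw [← hβ0]
      simp only [zero_mul, add_zero]
      exact mul_le_mul_of_nonneg_left hcast hα
    · -- both positive : sublevel set is finite
      have hTfin : {s ∈ S | α * s.1 + β * s.2 ≤ α * s₀.1 + β * s₀.2}.Finite := by
        apply Set.Finite.subset
          ((Set.finite_Iic ⌈(α * s₀.1 + β * s₀.2) / α⌉₊).prod
            (Set.finite_Iic ⌈(α * s₀.1 + β * s₀.2) / β⌉₊))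
        rintro s ⟨_, hsle⟩
        have hnn1 : (0:ℝ) ≤ β * s.2 := mul_nonneg hβ (Nat.cast_nonneg _)
        have hnn2 : (0:ℝ) ≤ α * s.1 := mul_nonneg hα (Nat.cast_nonneg _)
        constructor
        · have h2 : (s.1 : ℝ) ≤ (α * s₀.1 + β * s₀.2) / α :=
            (le_div_iff₀ hαpos).2 (by linarith)
          have h3 : (s.1 : ℝ) ≤ (⌈(α * s₀.1 + β * s₀.2) / α⌉₊ : ℝ) := h2.trans (Nat.le_ceil _)
          exact_mod_cast h3
        · have h2 : (s.2 : ℝ) ≤ (α * s₀.1 + β * s₀.2) / β :=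
            (le_div_iff₀ hβpos).2 (by linarith)
          have h3 : (s.2 : ℝ) ≤ (⌈(α * s₀.1 + β * s₀.2) / β⌉₊ : ℝ) := h2.trans (Nat.le_ceil _)
          exact_mod_cast h3
      have hTne : {s ∈ S | α * s.1 + β * s.2 ≤ α * s₀.1 + β * s₀.2}.Nonempty :=
        ⟨s₀, hs₀, le_refl _⟩
      obtain ⟨u, huT, hu⟩ := Set.exists_min_image _
        (fun s : ℕ × ℕ => α * s.1 + β * s.2) hTfin hTne
      refine ⟨u, huT.1, fun s hs => ?_⟩
      by_cases h : α * s.1 + β * s.2 ≤ α * s₀.1 + β * s₀.2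
      · exact hu s ⟨hs, h⟩
      · push_neg at h
        exact (hu s₀ ⟨hs₀, le_refl _⟩).trans h.le

/-- A lexicographic minimum: minimal value of the functional, then minimal first coordinate,
then minimal second coordinate. -/
lemma exists_lexmin (S : Set (ℕ × ℕ)) (hS : S.Nonempty) (α β : ℝ) (hα : 0 ≤ α) (hβ : 0 ≤ β) :
    ∃ u ∈ S, ∀ s ∈ S,
      (α * u.1 + β * u.2 ≤ α * s.1 + β * s.2) ∧
      (α * s.1 + β * s.2 ≤ α * u.1 + β * u.2 → u.1 ≤ s.1 ∧ (s.1 ≤ u.1 → u.2 ≤ s.2)) := by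
  obtain ⟨u₀, hu₀S, hu₀⟩ := exists_ell_min S hS α β hα hβ
  set M1 := {s ∈ S | α * s.1 + β * s.2 ≤ α * u₀.1 + β * u₀.2} with hM1
  have hM1ne : M1.Nonempty := ⟨u₀, hu₀S, le_refl _⟩
  have hine : {i | ∃ j, (i, j) ∈ M1}.Nonempty := by
    obtain ⟨m, hm⟩ := hM1ne
    exact ⟨m.1, m.2, by simpa using hm⟩
  set i₀ := sInf {i | ∃ j, (i, j) ∈ M1} with hi₀
  obtain ⟨j₁, hj₁⟩ := Nat.sInf_mem hine
  have hjne : {j | (i₀, j) ∈ M1}.Nonempty := ⟨j₁, hj₁⟩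
  set j₀ := sInf {j | (i₀, j) ∈ M1} with hj₀
  have huM1 : (i₀, j₀) ∈ M1 := Nat.sInf_mem hjne
  refine ⟨(i₀, j₀), huM1.1, fun s hs => ?_⟩
  have hℓu : α * (i₀ : ℝ) + β * (j₀ : ℝ) ≤ α * u₀.1 + β * u₀.2 := huM1.2
  constructor
  · exact hℓu.trans (hu₀ s hs)
  · intro hle
    have hsM1 : s ∈ M1 := ⟨hs, hle.trans hℓu⟩
    have hi : i₀ ≤ s.1 := Nat.sInf_le ⟨s.2, by simpa using hsM1⟩
    refine ⟨hi, fun hsi => ?_⟩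
    have : s.1 = i₀ := le_antisymm hsi hi
    have hsM2 : (i₀, s.2) ∈ M1 := by rwa [← this, Prod.mk.eta]
    exact Nat.sInf_le hsM2

/-- Key multiplicativity: the sum of "lexicographically extremal" support points of `G` and `H`
lies in the support of `G * H`. -/
lemma mem_suppSet_mul {G H : MvPowerSeries (Fin 2) ℝ} {u v : ℕ × ℕ}
    (hu : u ∈ suppSet G) (hv : v ∈ suppSet H)
    (huniq : ∀ s ∈ suppSet G, ∀ t ∈ suppSet H, s + t = u + v → s = u ∧ t = v) :
    u + v ∈ suppSet (G * H) := by
  classical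
  have key : coef (G * H) (u + v) = coef G u * coef H v := by
    rw [coef, MvPowerSeries.coeff_mul]
    set du : Fin 2 →₀ ℕ := Finsupp.single 0 u.1 + Finsupp.single 1 u.2 with hdu
    set dv : Fin 2 →₀ ℕ := Finsupp.single 0 v.1 + Finsupp.single 1 v.2 with hdv
    have hsum : du + dv = Finsupp.single (0 : Fin 2) (u + v).1 + Finsupp.single (1 : Fin 2) (u + v).2 := by
      rw [hdu, hdv, Prod.fst_add, Prod.snd_add, Finsupp.single_add, Finsupp.single_add]
      abel
    have hmem : (du, dv) ∈ Finset.HasAntidiagonal.antidiagonal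
        (Finsupp.single (0 : Fin 2) (u + v).1 + Finsupp.single (1 : Fin 2) (u + v).2) := by
      rw [Finset.HasAntidiagonal.mem_antidiagonal]; exact hsum
    rw [Finset.sum_eq_single_of_mem (du, dv) hmem]
    · have e1 : MvPowerSeries.coeff (R := ℝ) du G = coef G u := by
        rw [coeff_eq_coef, hdu]; simp
      have e2 : MvPowerSeries.coeff (R := ℝ) dv H = coef H v := by
        rw [coeff_eq_coef, hdv]; simp
      rw [e1, e2]
    · rintro ⟨s, t⟩ hst hne
      rw [Finset.HasAntidiagonal.mem_antidiagonal] at hst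
      by_contra hnz
      have hsG : MvPowerSeries.coeff (R := ℝ) s G ≠ 0 := left_ne_zero_of_mul hnz
      have htH : MvPowerSeries.coeff (R := ℝ) t H ≠ 0 := right_ne_zero_of_mul hnz
      have hs' : (s 0, s 1) ∈ suppSet G := by
        rw [suppSet, Set.mem_setOf_eq, ← coeff_eq_coef]; exact hsG
      have ht' : (t 0, t 1) ∈ suppSet H := by
        rw [suppSet, Set.mem_setOf_eq, ← coeff_eq_coef]; exact htH
      have h0 : s 0 + t 0 = (u + v).1 := by
        have := congrArg (fun f : Fin 2 →₀ ℕ => f 0) hst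
        simpa using this
      have h1 : s 1 + t 1 = (u + v).2 := by
        have := congrArg (fun f : Fin 2 →₀ ℕ => f 1) hst
        simpa using this
      have hadd : (s 0, s 1) + (t 0, t 1) = u + v := Prod.ext h0 h1
      obtain ⟨hsu, htv⟩ := huniq _ hs' _ ht' hadd
      apply hne
      have hseq : s = du := by
        rw [hdu, ← hsu]
        exact fin2_decomp s
      have hteq : t = dv := by
        rw [hdv, ← htv]
        exact fin2_decomp t
      rw [hseq, hteq]
  rw [suppSet, Set.mem_setOf_eq, key]
  exact mul_ne_zero hu hv

/-- The lower convex semi-hull of any set of lattice points is closed. -/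
lemma isClosed_hull (S : Set (ℕ × ℕ)) :
    IsClosed (convexHull ℝ (embed '' S + cone)) := by
  classical
  set M := {m ∈ S | ∀ s ∈ S, s ≤ m → s = m} with hM
  have hpwo : (Set.univ : Set (ℕ × ℕ)).IsPWO := by
    have h1 : (Set.univ : Set ℕ).IsPWO := (Set.isWF_univ_iff.2 ⟨wellFounded_lt⟩).isPWO
    simpa [Set.univ_prod_univ] using h1.prod h1
  have hMfin : M.Finite := by
    apply IsAntichain.finite_of_partiallyWellOrderedOn (r := (· ≤ ·))
    · intro a ha b hb hab hle
      exact hab (hb.2 a ha.1 hle)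
    · exact hpwo.mono (Set.subset_univ M)
  have hcover : ∀ s ∈ S, ∃ m ∈ M, m ≤ s := by
    intro s hs
    have hwf : {t ∈ S | t ≤ s}.IsWF := (hpwo.isWF).mono (Set.subset_univ _)
    have hne : {t ∈ S | t ≤ s}.Nonempty := ⟨s, hs, le_rfl⟩
    have hmS := hwf.min_mem hne
    refine ⟨hwf.min hne, ⟨hmS.1, fun t ht hts => ?_⟩, hmS.2⟩
    by_contra htm
    exact hwf.not_lt_min hne ⟨ht, hts.trans hmS.2⟩ (lt_of_le_of_ne hts htm)
  have key : convexHull ℝ (embed '' S + cone) = convexHull ℝ (embed '' M) + cone := by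
    rw [convexHull_add, convex_cone.convexHull_eq]
    apply Set.Subset.antisymm
    · have h1 : convexHull ℝ (embed '' S) ⊆ convexHull ℝ (embed '' M) + cone := by
        apply convexHull_min _ ((convex_convexHull ℝ _).add convex_cone)
        rintro x ⟨p, hp, rfl⟩
        obtain ⟨m, hm, hmp⟩ := hcover p hp
        refine ⟨embed m, subset_convexHull ℝ _ ⟨m, hm, rfl⟩,
          ((p.1 : ℝ) - m.1, (p.2 : ℝ) - m.2), ⟨?_, ?_⟩, ?_⟩
        · have : (m.1 : ℝ) ≤ (p.1 : ℝ) := by exact_mod_cast hmp.1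
          simpa using sub_nonneg.2 this
        · have : (m.2 : ℝ) ≤ (p.2 : ℝ) := by exact_mod_cast hmp.2
          simpa using sub_nonneg.2 this
        · refine Prod.ext ?_ ?_ <;> simp [embed]
      calc convexHull ℝ (embed '' S) + cone
          ⊆ (convexHull ℝ (embed '' M) + cone) + cone := Set.add_subset_add h1 subset_rfl
        _ = convexHull ℝ (embed '' M) + cone := by rw [add_assoc, cone_add_cone]
    · exact Set.add_subset_add (convexHull_mono (Set.image_mono fun m hm => hm.1)) subset_rfl
  rw [key]
  exact IsClosed.add_left_of_isCompact isClosed_cone ((hMfin.image embed).isCompact_convexHull (𝕜 := ℝ))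

/-- The crucial Newton-polygon inclusion. -/
lemma embed_add_mem (G H : MvPowerSeries (Fin 2) ℝ) (hG : G ≠ 0) (hH : H ≠ 0)
    {a b : ℕ × ℕ} (ha : a ∈ suppSet G) (hb : b ∈ suppSet H) :
    embed (a + b) ∈ convexHull ℝ (embed '' suppSet (G * H) + cone) := by
  by_contra hmem
  obtain ⟨f, c, hfx, hfP⟩ :=
    geometric_hahn_banach_point_closed (convex_convexHull ℝ _) (isClosed_hull _) hmem
  set α := f (1, 0) with hαdef
  set β := f (0, 1) with hβdef
  have hf : ∀ p : ℝ × ℝ, f p = α * p.1 + β * p.2 := by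
    intro p
    have hp : p = p.1 • ((1:ℝ), (0:ℝ)) + p.2 • ((0:ℝ), (1:ℝ)) := by
      ext <;> simp
    conv_lhs => rw [hp]
    rw [map_add, map_smul, map_smul, smul_eq_mul, smul_eq_mul, ← hαdef, ← hβdef]
    ring
  have hGH : G * H ≠ 0 := mul_ne_zero hG hH
  obtain ⟨p₀, hp₀⟩ := suppSet_nonempty hGH
  have hp₀P : ∀ q ∈ cone, c < f (embed p₀ + q) := fun q hq =>
    hfP _ (subset_convexHull ℝ _ ⟨embed p₀, ⟨p₀, hp₀, rfl⟩, q, hq, rfl⟩)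
  have hc : c < f (embed p₀) := by
    have := hp₀P 0 zero_mem_cone
    simpa using this
  have hα : 0 ≤ α := by
    by_contra hneg
    push_neg at hneg
    have hXnn : 0 ≤ (f (embed p₀) - c) / (-α) := div_nonneg (by linarith) (by linarith)
    have h2 := hp₀P ((f (embed p₀) - c) / (-α) + 1, 0) ⟨by linarith, le_refl 0⟩
    rw [map_add, hf ((f (embed p₀) - c) / (-α) + 1, 0)] at h2
    simp only [mul_zero, add_zero] at h2
    have hne : -α ≠ 0 := by linarith
    have hfrac : α * ((f (embed p₀) - c) / (-α)) = -(f (embed p₀) - c) := by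
      field_simp
      rw [mul_div_cancel_left₀ _ (neg_ne_zero.mp hne)]
    have hexp : α * ((f (embed p₀) - c) / (-α) + 1)
        = α * ((f (embed p₀) - c) / (-α)) + α := by ring
    linarith
  have hβ : 0 ≤ β := by
    by_contra hneg
    push_neg at hneg
    have hXnn : 0 ≤ (f (embed p₀) - c) / (-β) := div_nonneg (by linarith) (by linarith)
    have h2 := hp₀P (0, (f (embed p₀) - c) / (-β) + 1) ⟨le_refl 0, by linarith⟩
    rw [map_add, hf (0, (f (embed p₀) - c) / (-β) + 1)] at h2
    simp only [mul_zero, zero_add] at h2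
    have hne : -β ≠ 0 := by linarith
    have hfrac : β * ((f (embed p₀) - c) / (-β)) = -(f (embed p₀) - c) := by
      field_simp
      rw [mul_div_cancel_left₀ _ (neg_ne_zero.mp hne)]
    have hexp : β * ((f (embed p₀) - c) / (-β) + 1)
        = β * ((f (embed p₀) - c) / (-β)) + β := by ring
    linarith
  obtain ⟨u, huS, hu⟩ := exists_lexmin (suppSet G) ⟨a, ha⟩ α β hα hβ
  obtain ⟨v, hvS, hv⟩ := exists_lexmin (suppSet H) ⟨b, hb⟩ α β hα hβ
  have huv : u + v ∈ suppSet (G * H) := by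
    apply mem_suppSet_mul huS hvS
    intro s hs t ht hst
    have e1 : s.1 + t.1 = u.1 + v.1 := congrArg Prod.fst hst
    have e2 : s.2 + t.2 = u.2 + v.2 := congrArg Prod.snd hst
    have e1' : (s.1 : ℝ) + t.1 = (u.1 : ℝ) + v.1 := by exact_mod_cast e1
    have e2' : (s.2 : ℝ) + t.2 = (u.2 : ℝ) + v.2 := by exact_mod_cast e2
    have h1 := (hu s hs).1
    have h2 := (hv t ht).1
    have hse : α * s.1 + β * s.2 ≤ α * u.1 + β * u.2 := by nlinarith [h1, h2]
    have hte : α * t.1 + β * t.2 ≤ α * v.1 + β * v.2 := by nlinarith [h1, h2]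
    obtain ⟨hi, hij⟩ := (hu s hs).2 hse
    obtain ⟨hi', hij'⟩ := (hv t ht).2 hte
    have hs1 : s.1 = u.1 := by omega
    have ht1 : t.1 = v.1 := by omega
    have hju := hij hs1.le
    have hjv := hij' ht1.le
    have hs2 : s.2 = u.2 := by omega
    have ht2 : t.2 = v.2 := by omega
    exact ⟨Prod.ext hs1 hs2, Prod.ext ht1 ht2⟩
  have h1 : c < f (embed (u + v)) :=
    hfP _ (subset_convexHull ℝ _ ⟨embed (u + v), ⟨u + v, huv, rfl⟩, 0, zero_mem_cone, add_zero _⟩)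
  have h2 : f (embed (u + v)) ≤ f (embed (a + b)) := by
    rw [hf, hf]
    have hu' := (hu a ha).1
    have hv' := (hv b hb).1
    simp only [embed, Prod.fst_add, Prod.snd_add]
    push_cast
    nlinarith [hu', hv']
  linarith [hfx]

lemma lsh_add (A B : Set (ℕ × ℕ)) : lsh (A + B) = lsh A + lsh B := by
  have himg : embed '' (A + B) = embed '' A + embed '' B := by
    rw [embed_eq]; exact Set.image_add embedHom
  rw [lsh_def, lsh_def, lsh_def]
  calc convexHull ℝ (embed '' (A + B) + cone)
      = convexHull ℝ (embed '' A + embed '' B + (cone + cone)) := by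
        rw [himg, cone_add_cone]
    _ = convexHull ℝ ((embed '' A + cone) + (embed '' B + cone)) := by
        rw [add_add_add_comm (embed '' A) (embed '' B) cone cone]
    _ = convexHull ℝ (embed '' A + cone) + convexHull ℝ (embed '' B + cone) :=
        convexHull_add _ _

end LshAux

open LshAux in
/-- the lower convex semi-hull of the support of a product is the
Minkowski sum of the lower convex semi-hulls of the supports of the factors. -/
theorem lsh_support_mul (G H : MvPowerSeries (Fin 2) ℝ) (hG : G ≠ 0) (hH : H ≠ 0) :
    lsh (suppSet (G * H)) = lsh (suppSet G) + lsh (suppSet H) := by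
  rw [← lsh_add]
  apply Set.Subset.antisymm
  · rw [lsh_def, lsh_def]
    exact convexHull_mono (Set.add_subset_add (Set.image_mono (suppSet_mul_subset G H)) subset_rfl)
  · rw [lsh_def (suppSet G + suppSet H), lsh_def]
    apply convexHull_min _ (convex_convexHull ℝ _)
    rintro x ⟨y, ⟨p, hp, rfl⟩, q, hq, rfl⟩
    obtain ⟨a, ha, b, hb, rfl⟩ := hp
    have h := embed_add_mem G H hG hH ha hb
    have hP : convexHull ℝ (embed '' suppSet (G * H) + cone) + cone
        = convexHull ℝ (embed '' suppSet (G * H) + cone) :=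
      calc convexHull ℝ (embed '' suppSet (G * H) + cone) + cone
          = convexHull ℝ (embed '' suppSet (G * H) + cone) + convexHull ℝ cone := by
            rw [convex_cone.convexHull_eq]
        _ = convexHull ℝ (embed '' suppSet (G * H) + cone + cone) :=
            (convexHull_add _ _).symm
        _ = convexHull ℝ (embed '' suppSet (G * H) + (cone + cone)) := by rw [add_assoc]
        _ = convexHull ℝ (embed '' suppSet (G * H) + cone) := by rw [cone_add_cone]
    have hmem2 : embed (a + b) + q
        ∈ convexHull ℝ (embed '' suppSet (G * H) + cone) + cone := ⟨_, h, q, hq, rfl⟩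
    rwa [hP] at hmem2
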